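/- Let A ⊆ B(H) be an operator algebra and suppose the closed A-submodule V ⊆ H is complemented by a closed subspace W that is invariant both under A and under the commutant A′. Then W is the unique closed A-submodule complementing V in H. -/

import Mathlib

/-- if a closed submodule `V` of `H` is topologically complemented by a
closed subspace `W` invariant under both `A` and the commutant `A′`, then `W` is the
unique closed `A`-submodule complementing `V`. -/
theorem unique_complement_of_bicommutant_invariant
    {H : Type*} [NormedAddCommGroup H] [InnerProductSpace ℂ H] [CompleteSpace H]
    (A : Subalgebra ℂ (H →L[ℂ] H))
    (V W : Submodule ℂ H)
    (hVc : IsClosed (V : Set H)) (hWc : IsClosed (W : Set H))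
    (hVinv : ∀ a ∈ A, ∀ x ∈ V, a x ∈ V) (hWinv : ∀ a ∈ A, ∀ x ∈ W, a x ∈ W)
    (hWinv' : ∀ T : H →L[ℂ] H, (∀ a ∈ A, Commute T a) → ∀ x ∈ W, T x ∈ W)
    (hmeet : V ⊓ W = ⊥) (hjoin : V ⊔ W = ⊤) :
    ∀ W' : Submodule ℂ H, IsClosed (W' : Set H) → (∀ a ∈ A, ∀ x ∈ W', a x ∈ W') →
      V ⊓ W' = ⊥ → V ⊔ W' = ⊤ → W' = W := by
  intro W' hW'c hW'inv hmeet' hjoin'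
  have hcompl' : IsCompl V W' :=
    ⟨disjoint_iff.mpr hmeet', codisjoint_iff.mpr hjoin'⟩
  -- the continuous projection onto V along W'
  set P : H →L[ℂ] H :=
    V.subtypeL.comp (V.linearProjOfClosedCompl W' hcompl' hVc hW'c) with hP
  have hPapply : ∀ x : H, P x = (V.projectionOnto W' hcompl' x : H) := fun x => rfl
  have hPV : ∀ x ∈ V, P x = x := by
    intro x hx
    rw [hPapply, Submodule.projectionOnto_apply_of_mem_left hcompl' hx]
  have hPW' : ∀ x ∈ W', P x = 0 := by
    intro x hx
    rw [hPapply, Submodule.projectionOnto_apply_of_mem_right hcompl' hx,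
      Submodule.coe_zero]
  -- P commutes with A
  have hcomm : ∀ a ∈ A, Commute P a := by
    intro a ha
    ext x
    obtain ⟨v, hv, w, hw, rfl⟩ : ∃ v ∈ V, ∃ w ∈ W', v + w = x := by
      have hx : x ∈ V ⊔ W' := hjoin' ▸ Submodule.mem_top
      rcases Submodule.mem_sup.mp hx with ⟨v, hv, w, hw, h⟩
      exact ⟨v, hv, w, hw, h⟩
    have h1 : P (v + w) = v := by
      rw [map_add, hPV v hv, hPW' w hw, add_zero]
    have h2 : a (v + w) = a v + a w := map_add a v w
    simp only [ContinuousLinearMap.coe_mul, Function.comp_apply,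
      ContinuousLinearMap.mul_apply]
    rw [h1, h2, map_add, hPV _ (hVinv a ha v hv), hPW' _ (hW'inv a ha w hw), add_zero]
  -- hence P maps W into W, so P vanishes on W (image lies in V ∩ W = 0)
  have hWsub : W ≤ W' := by
    intro w hw
    have hPw : P w ∈ W := hWinv' P hcomm w hw
    have hPwV : P w ∈ V := (V.projectionOnto W' hcompl' w).2
    have hPw0 : P w = 0 := by
      have : P w ∈ V ⊓ W := ⟨hPwV, hPw⟩
      simpa [hmeet] using this
    -- w - P w ∈ W'
    have hsub : w - P w ∈ W' := by
      have hx : w ∈ V ⊔ W' := hjoin' ▸ Submodule.mem_top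
      rcases Submodule.mem_sup.mp hx with ⟨v, hv, w'', hw'', h⟩
      have hPval : P w = v := by
        rw [← h, map_add, hPV v hv, hPW' w'' hw'', add_zero]
      rw [hPval, ← h]
      simpa using hw''
    rwa [hPw0, sub_zero] at hsub
  -- W ⊆ W' and both complement V, hence equal
  refine le_antisymm ?_ hWsub
  intro w' hw'
  have hx : w' ∈ V ⊔ W := hjoin ▸ Submodule.mem_top
  rcases Submodule.mem_sup.mp hx with ⟨v, hv, w, hw, h⟩
  have hvW' : v ∈ W' := by
    have : v = w' - w := by rw [← h]; abel
    rw [this]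
    exact Submodule.sub_mem _ hw' (hWsub hw)
  have hv0 : v = 0 := by
    have : v ∈ V ⊓ W' := ⟨hv, hvW'⟩
    simpa [hmeet'] using this
  rw [← h, hv0, zero_add]
  exact hw
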